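/- Let a, c ∈ ℝ and b, d ∈ ℝ ∪ {+∞} with a < b and c < d. Then the k-vector space Hom(k_{[a,b)}, k_{[c,d)}) is one-dimensional over k if a ≤ c < b ≤ d, and is zero otherwise. -/

import Mathlib

open CategoryTheory TopologicalSpace Set Topology

noncomputable section

variable (k : Type) [Field k]

/-- The support of the function `s : V ∩ I → k` is closed in `V`. -/
def SuppClosedIn (I V : Set ℝ) (s : ↥(V ∩ I) → k) : Prop :=
  ∀ x ∈ V, x ∈ closure {y : ℝ | ∃ h : y ∈ V ∩ I, s ⟨y, h⟩ ≠ 0} →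
    ∃ h : x ∈ V ∩ I, s ⟨x, h⟩ ≠ 0

lemma zero_locConst (I V : Set ℝ) :
    IsLocallyConstant (0 : ↥(V ∩ I) → k) ∧ SuppClosedIn k I V 0 := by
  constructor
  · exact IsLocallyConstant.const 0
  · intro x _ hx
    exfalso
    have h0 : {y : ℝ | ∃ h : y ∈ V ∩ I, (0 : ↥(V ∩ I) → k) ⟨y, h⟩ ≠ 0} = ∅ := by
      ext y; simp
    rw [h0, closure_empty] at hx
    exact hx

/-- The sections over `V` of the sheaf `k_I`: locally constant functions on `V ∩ I`
whose support is closed in `V`. -/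
def secSub (I V : Set ℝ) : Submodule k (↥(V ∩ I) → k) where
  carrier := {s | IsLocallyConstant s ∧ SuppClosedIn k I V s}
  zero_mem' := zero_locConst k I V
  add_mem' := by
    rintro s t ⟨hslc, hscl⟩ ⟨htlc, htcl⟩
    have hlc : IsLocallyConstant (s + t) := hslc.comp₂ htlc (· + ·)
    refine ⟨hlc, ?_⟩
    intro x hxV hxcl
    have hsub : {y : ℝ | ∃ h : y ∈ V ∩ I, (s + t) ⟨y, h⟩ ≠ 0}
        ⊆ {y : ℝ | ∃ h : y ∈ V ∩ I, s ⟨y, h⟩ ≠ 0}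
          ∪ {y : ℝ | ∃ h : y ∈ V ∩ I, t ⟨y, h⟩ ≠ 0} := by
      rintro y ⟨h, hy⟩
      by_cases hsy : s ⟨y, h⟩ = 0
      · refine Or.inr ⟨h, fun h0 => hy ?_⟩
        show s ⟨y, h⟩ + t ⟨y, h⟩ = 0
        rw [hsy, h0, add_zero]
      · exact Or.inl ⟨h, hsy⟩
    have hxVI : x ∈ V ∩ I := by
      have hcl2 := closure_mono hsub hxcl
      rw [closure_union] at hcl2
      rcases hcl2 with h | h
      · exact (hscl x hxV h).choose
      · exact (htcl x hxV h).choose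
    refine ⟨hxVI, ?_⟩
    have hA : IsClosed {y : ↥(V ∩ I) | (s + t) y ≠ 0} := by
      have h1 : IsOpen ((s + t) ⁻¹' {0}) := hlc {0}
      have h2 := h1.isClosed_compl
      have h3 : ((s + t) ⁻¹' {0})ᶜ = {y : ↥(V ∩ I) | (s + t) y ≠ 0} := by
        ext y; simp
      exact h3 ▸ h2
    have hmem : (⟨x, hxVI⟩ : ↥(V ∩ I)) ∈ closure {y : ↥(V ∩ I) | (s + t) y ≠ 0} := by
      rw [closure_subtype]
      have himg : Subtype.val '' {y : ↥(V ∩ I) | (s + t) y ≠ 0}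
          = {y : ℝ | ∃ h : y ∈ V ∩ I, (s + t) ⟨y, h⟩ ≠ 0} := by
        ext y
        constructor
        · rintro ⟨z, hz, rfl⟩; exact ⟨z.2, hz⟩
        · rintro ⟨h, hy⟩; exact ⟨⟨y, h⟩, hy, rfl⟩
      rw [himg]
      exact hxcl
    have := hA.closure_eq ▸ hmem
    exact this
  smul_mem' := by
    intro c s hs
    rcases hs with ⟨hlc, hcl⟩
    by_cases hc : c = 0
    · subst hc
      rw [zero_smul]
      exact zero_locConst k I V
    · constructor
      · exact hlc.comp (fun a => c • a)
      · intro x hxV hxcl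
        have hset : {y : ℝ | ∃ h : y ∈ V ∩ I, (c • s) ⟨y, h⟩ ≠ 0}
            = {y : ℝ | ∃ h : y ∈ V ∩ I, s ⟨y, h⟩ ≠ 0} := by
          ext y
          constructor
          · rintro ⟨h, hy⟩
            refine ⟨h, fun h0 => hy ?_⟩
            show c • s ⟨y, h⟩ = 0
            rw [h0, smul_zero]
          · rintro ⟨h, hy⟩
            exact ⟨h, by simpa [smul_eq_zero, hc] using hy⟩
        rw [hset] at hxcl
        obtain ⟨h, hy⟩ := hcl x hxV hxcl
        exact ⟨h, by simpa [smul_eq_zero, hc] using hy⟩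
/-- Restriction of sections. -/
def resFun (I : Set ℝ) {V W : Set ℝ} (h : W ⊆ V) (s : ↥(V ∩ I) → k) : ↥(W ∩ I) → k :=
  fun y => s ⟨y.1, ⟨h y.2.1, y.2.2⟩⟩

lemma resFun_mem (I : Set ℝ) {V W : Set ℝ} (h : W ⊆ V) (s : ↥(V ∩ I) → k)
    (hs : s ∈ secSub k I V) : resFun k I h s ∈ secSub k I W := by
  obtain ⟨hlc, hcl⟩ := hs
  constructor
  · exact hlc.comp_continuous (Continuous.subtype_mk continuous_subtype_val _)
  · intro x hxW hxcl
    have hsub : {y : ℝ | ∃ h' : y ∈ W ∩ I, resFun k I h s ⟨y, h'⟩ ≠ 0}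
        ⊆ {y : ℝ | ∃ h' : y ∈ V ∩ I, s ⟨y, h'⟩ ≠ 0} := by
      rintro y ⟨h', hy⟩
      exact ⟨⟨h h'.1, h'.2⟩, hy⟩
    obtain ⟨hxVI, hne⟩ := hcl x (h hxW) (closure_mono hsub hxcl)
    exact ⟨⟨hxW, hxVI.2⟩, hne⟩

/-- Restriction as a linear map. -/
def resLM (I : Set ℝ) {V W : Set ℝ} (h : W ⊆ V) : secSub k I V →ₗ[k] secSub k I W where
  toFun s := ⟨resFun k I h s.1, resFun_mem k I h s.1 s.2⟩
  map_add' s t := rfl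
  map_smul' c s := rfl

/-- The presheaf `k_I` on `ℝ`. -/
def intervalPresheaf (I : Set ℝ) : TopCat.Presheaf (ModuleCat.{0} k) (TopCat.of ℝ) where
  obj V := ModuleCat.of k (secSub k I V.unop.1)
  map {V W} f := ModuleCat.ofHom (resLM k I (leOfHom f.unop))
  map_id V := rfl
  map_comp f g := rfl
theorem intervalPresheaf_isSheaf (I : Set ℝ) : (intervalPresheaf k I).IsSheaf := by
  classical
  rw [TopCat.Presheaf.isSheaf_iff_isSheafUniqueGluing]
  intro ι U sf hcomp
  let sf' : ∀ i, ↥(secSub k I (U i).1) := sf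
  -- pointwise compatibility
  have key : ∀ (i j : ι) (x : ℝ) (hxi : x ∈ (U i).1 ∩ I) (hxj : x ∈ (U j).1 ∩ I),
      (sf' i).1 ⟨x, hxi⟩ = (sf' j).1 ⟨x, hxj⟩ := by
    intro i j x hxi hxj
    have h := hcomp i j
    have hmem : x ∈ (U i ⊓ U j).1 ∩ I := ⟨⟨hxi.1, hxj.1⟩, hxi.2⟩
    have h2 := congrFun (congrArg Subtype.val h) ⟨x, hmem⟩
    exact h2
  have hmemS : ∀ x : ↥((iSup U : Opens (TopCat.of ℝ)).1 ∩ I), ∃ i, x.1 ∈ U i := by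
    intro x
    exact Opens.mem_iSup.mp x.2.1
  set idx : ↥((iSup U : Opens (TopCat.of ℝ)).1 ∩ I) → ι := fun x => (hmemS x).choose with hidxdef
  have hidx : ∀ x, x.1 ∈ U (idx x) := fun x => (hmemS x).choose_spec
  set s₀ : ↥((iSup U : Opens (TopCat.of ℝ)).1 ∩ I) → k :=
    fun x => (sf' (idx x)).1 ⟨x.1, ⟨hidx x, x.2.2⟩⟩ with hs₀def
  have hs₀ : ∀ (x : ↥((iSup U : Opens (TopCat.of ℝ)).1 ∩ I)) (i : ι) (hx : x.1 ∈ U i),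
      s₀ x = (sf' i).1 ⟨x.1, ⟨hx, x.2.2⟩⟩ :=
    fun x i hx => key (idx x) i x.1 ⟨hidx x, x.2.2⟩ ⟨hx, x.2.2⟩
  have hlc : IsLocallyConstant s₀ := by
    rw [IsLocallyConstant.iff_exists_open]
    intro x
    obtain ⟨i, hi⟩ := hmemS x
    have hlci : IsLocallyConstant ((sf' i).1 : ↥((U i).1 ∩ I) → k) := (sf' i).2.1
    obtain ⟨W, hWopen, hpW, hWconst⟩ := hlci.exists_open (⟨x.1, ⟨hi, x.2.2⟩⟩ : ↥((U i).1 ∩ I))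
    obtain ⟨O, hOopen, hWO⟩ := isOpen_induced_iff.mp hWopen
    subst hWO
    refine ⟨Subtype.val ⁻¹' (O ∩ (U i).1), (hOopen.inter (U i).2).preimage continuous_subtype_val,
      ⟨hpW, hi⟩, ?_⟩
    intro y hy
    have hyi : y.1 ∈ U i := hy.2
    rw [hs₀ y i hyi, hs₀ x i hi]
    exact hWconst ⟨y.1, ⟨hyi, y.2.2⟩⟩ hy.1
  have hscl : SuppClosedIn k I (iSup U : Opens (TopCat.of ℝ)).1 s₀ := by
    intro x hxS hxcl
    obtain ⟨i, hi⟩ := Opens.mem_iSup.mp hxS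
    have h1 : x ∈ closure ({y : ℝ | ∃ h : y ∈ (iSup U : Opens (TopCat.of ℝ)).1 ∩ I, s₀ ⟨y, h⟩ ≠ 0}
        ∩ (U i).1) := by
      rw [mem_closure_iff] at hxcl ⊢
      intro O hO hxO
      obtain ⟨z, hz⟩ := hxcl (O ∩ (U i).1) (hO.inter (U i).2) ⟨hxO, hi⟩
      exact ⟨z, hz.1.1, hz.2, hz.1.2⟩
    have hsub : {y : ℝ | ∃ h : y ∈ (iSup U : Opens (TopCat.of ℝ)).1 ∩ I, s₀ ⟨y, h⟩ ≠ 0}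
        ∩ (U i).1 ⊆ {y : ℝ | ∃ h : y ∈ (U i).1 ∩ I, (sf' i).1 ⟨y, h⟩ ≠ 0} := by
      rintro y ⟨⟨hy, hne⟩, hyi⟩
      refine ⟨⟨hyi, hy.2⟩, ?_⟩
      rw [← hs₀ ⟨y, hy⟩ i hyi]
      exact hne
    obtain ⟨hyUI, hne⟩ := (sf' i).2.2 x hi (closure_mono hsub h1)
    refine ⟨⟨hxS, hyUI.2⟩, ?_⟩
    rw [hs₀ ⟨x, ⟨hxS, hyUI.2⟩⟩ i hyUI.1]
    exact hne
  refine ⟨(⟨s₀, hlc, hscl⟩ : secSub k I _), ?_, ?_⟩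
  · intro i
    apply Subtype.ext
    funext y
    exact hs₀ ⟨y.1, ⟨leOfHom (Opens.leSupr U i) y.2.1, y.2.2⟩⟩ i y.2.1
  · intro t ht
    apply Subtype.ext
    funext x
    have h := ht (idx x)
    have h2 := congrFun (congrArg Subtype.val h) ⟨x.1, ⟨hidx x, x.2.2⟩⟩
    exact h2

/-- The sheaf `k_I` on `ℝ` for an interval `I`: locally constant functions on `V ∩ I`
whose support is closed in `V`. -/
def intervalSheaf (I : Set ℝ) :
    Sheaf (Opens.grothendieckTopology (TopCat.of ℝ)) (ModuleCat.{0} k) :=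
  ⟨intervalPresheaf k I, intervalPresheaf_isSheaf k I⟩
/-- The category of sheaves of `k`-vector spaces on `ℝ`. -/
abbrev RealSheafCat := Sheaf (Opens.grothendieckTopology (TopCat.of ℝ)) (ModuleCat.{0} k)

instance sheafHomSMul (F G : RealSheafCat k) : SMul k (F ⟶ G) :=
  ⟨fun c f => ⟨c • f.hom⟩⟩

instance sheafHomModule (F G : RealSheafCat k) : Module k (F ⟶ G) :=
  Function.Injective.module k
    { toFun := fun f : F ⟶ G => f.hom
      map_zero' := rfl
      map_add' := fun _ _ => rfl }
    (fun _ _ h => Sheaf.hom_ext h) (fun _ _ => rfl)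

instance : HasExt.{1} (RealSheafCat k) := by
  letI := HasDerivedCategory.standard (RealSheafCat k)
  exact hasExt_of_hasDerivedCategory _

/-- The interval `(a, b)` with possibly infinite endpoints. -/
def Ioo' (a b : EReal) : Set ℝ := {x : ℝ | a < (x : EReal) ∧ (x : EReal) < b}

/-- The interval `[a, b)` with a possibly infinite right endpoint. -/
def Ico' (a : ℝ) (b : EReal) : Set ℝ := {x : ℝ | a ≤ x ∧ (x : EReal) < b}

/-- The interval `(a, b]` with a possibly infinite left endpoint. -/
def Ioc' (a : EReal) (b : ℝ) : Set ℝ := {x : ℝ | a < (x : EReal) ∧ x ≤ b}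

/-- Identification of sheaves on the topological space `ℝ` with objects of `RealSheafCat`. -/
def toRS (F : TopCat.Sheaf (ModuleCat.{0} k) (TopCat.of ℝ)) : RealSheafCat k := F



namespace HomIcoIcoAux

open Opposite

/-- If `x ∈ V` but `x ∉ I`, a section of `k_I` over `V` vanishes on a neighbourhood of `x`. -/
lemma germZero {I V : Set ℝ} (hV : IsOpen V) (s : secSub k I V) {x : ℝ}
    (hxV : x ∈ V) (hx : x ∉ I) :
    ∃ W : Set ℝ, IsOpen W ∧ x ∈ W ∧ W ⊆ V ∧
      ∀ y, y ∈ W ∩ I → ∀ hy' : y ∈ V ∩ I, s.1 ⟨y, hy'⟩ = 0 := by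
  by_contra hcon
  push_neg at hcon
  have hcl : x ∈ closure {y : ℝ | ∃ h : y ∈ V ∩ I, s.1 ⟨y, h⟩ ≠ 0} := by
    rw [mem_closure_iff]
    intro O hO hxO
    obtain ⟨y, hyWI, hy', hne⟩ := hcon (O ∩ V) (hO.inter hV) ⟨hxO, hxV⟩ inter_subset_right
    exact ⟨y, hyWI.1.1, hy', hne⟩
  obtain ⟨h, _⟩ := s.2.2 x hxV hcl
  exact hx h.2

/-- Naturality of a sheaf morphism, applied pointwise. -/
lemma res_apply {I J : Set ℝ} (f : intervalSheaf k I ⟶ intervalSheaf k J)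
    {V W : Opens (TopCat.of ℝ)} (h : W ≤ V) (s : (secSub k I V.1 : Type))
    (x : ℝ) (hx : x ∈ W.1 ∩ J) :
    (f.hom.app (op W) ((intervalPresheaf k I).map (homOfLE h).op s)).1 ⟨x, hx⟩
      = (f.hom.app (op V) s).1 ⟨x, ⟨h hx.1, hx.2⟩⟩ := by
  have hnat := f.hom.naturality (homOfLE h).op
  exact congrArg
    (fun g : (intervalPresheaf k I).obj (op V) ⟶ (intervalPresheaf k J).obj (op W) =>
      (g s).1 ⟨x, hx⟩) hnat

/-- The set `(-∞, b)`. -/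
def VbSet (b : EReal) : Set ℝ := {x : ℝ | (x : EReal) < b}

lemma isOpen_VbSet (b : EReal) : IsOpen (VbSet b) := by
  have h : VbSet b = ((↑) : ℝ → EReal) ⁻¹' Set.Iio b := rfl
  rw [h]
  exact isOpen_Iio.preimage continuous_coe_real_ereal

/-- The open set `(-∞, b)` as an open of `ℝ`. -/
def Vb (b : EReal) : Opens (TopCat.of ℝ) :=
  ⟨VbSet b, isOpen_VbSet b⟩

lemma oneSec_supp (a : ℝ) (b : EReal) :
    SuppClosedIn k (Ico' a b) (Vb b).1 (fun _ => (1 : k)) := by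
  intro x hxV hxcl
  have hsub : {y : ℝ | ∃ h : y ∈ (Vb b).1 ∩ Ico' a b,
        ((fun _ => (1 : k)) : ↥((Vb b).1 ∩ Ico' a b) → k) ⟨y, h⟩ ≠ 0}
      ⊆ Set.Ici a := by
    rintro y ⟨⟨_, hy⟩, -⟩
    exact hy.1
  have hxa : x ∈ Set.Ici a := by
    have := closure_mono hsub hxcl
    rwa [isClosed_Ici.closure_eq] at this
  exact ⟨⟨hxV, ⟨hxa, hxV⟩⟩, one_ne_zero⟩

/-- The all-ones section of `k_{[a,b)}` over `(-∞, b)`. -/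
def oneSec (a : ℝ) (b : EReal) : (secSub k (Ico' a b) (Vb b).1 : Type) :=
  ⟨fun _ => 1, IsLocallyConstant.const 1, oneSec_supp k a b⟩

/-- The image of the all-ones section under a morphism `f : k_{[a,b)} ⟶ k_{[c,d)}`. -/
def tSec {a c : ℝ} {b d : EReal}
    (f : intervalSheaf k (Ico' a b) ⟶ intervalSheaf k (Ico' c d)) :
    (secSub k (Ico' c d) (Vb b).1 : Type) :=
  f.hom.app (op (Vb b)) (oneSec k a b)

/-- Sections of `k_{[c,d)}` over `(-∞,b)` take equal values at any two points. -/
lemma tconst {c : ℝ} {b d : EReal} (t : ↥(VbSet b ∩ Ico' c d) → k)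
    (h : IsLocallyConstant t) (x y : ↥(VbSet b ∩ Ico' c d)) : t x = t y := by
  have hS : Set.OrdConnected (VbSet b ∩ Ico' c d) := by
    constructor
    rintro p ⟨hpb, hpc, hpd⟩ q ⟨hqb, hqc, hqd⟩ z hz
    exact ⟨lt_of_le_of_lt (EReal.coe_le_coe_iff.mpr hz.2) hqb,
      le_trans hpc hz.1, lt_of_le_of_lt (EReal.coe_le_coe_iff.mpr hz.2) hqd⟩
  haveI := Subtype.preconnectedSpace hS.isPreconnected
  exact h.apply_eq_of_preconnectedSpace x y

open Classical in
/-- The master formula: the value of `f` on any section is the section value times the value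
of `tSec f`, on `[a,b)`, and `0` elsewhere. -/
lemma formula {a c : ℝ} {b d : EReal}
    (f : intervalSheaf k (Ico' a b) ⟶ intervalSheaf k (Ico' c d))
    (V : Opens (TopCat.of ℝ)) (s : (secSub k (Ico' a b) V.1 : Type))
    (x : ℝ) (hx : x ∈ V.1 ∩ Ico' c d) :
    (f.hom.app (op V) s).1 ⟨x, hx⟩ =
      if h : x ∈ Ico' a b then
        s.1 ⟨x, ⟨hx.1, h⟩⟩ * (tSec k f).1 ⟨x, ⟨h.2, hx.2⟩⟩
      else 0 := by
  by_cases h : x ∈ Ico' a b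
  · rw [dif_pos h]
    have hlc := s.2.1
    obtain ⟨U, hUo, hpU, hUc⟩ := hlc.exists_open ⟨x, hx.1, h⟩
    obtain ⟨O, hOo, hUO⟩ := isOpen_induced_iff.mp hUo
    subst hUO
    set W : Opens (TopCat.of ℝ) := ⟨O ∩ V.1 ∩ (Vb b).1, (hOo.inter V.2).inter (Vb b).2⟩
      with hWdef
    have hle1 : W ≤ V := fun y hy => hy.1.2
    have hle2 : W ≤ Vb b := fun y hy => hy.2
    have hxW : x ∈ W.1 := ⟨⟨hpU, hx.1⟩, h.2⟩
    have hkey : (intervalPresheaf k (Ico' a b)).map (homOfLE hle1).op s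
        = s.1 ⟨x, hx.1, h⟩ • (intervalPresheaf k (Ico' a b)).map (homOfLE hle2).op
            (oneSec k a b) := by
      apply Subtype.ext
      funext y
      have h1 : ((intervalPresheaf k (Ico' a b)).map (homOfLE hle1).op s).1 y
          = s.1 ⟨y.1, ⟨hle1 y.2.1, y.2.2⟩⟩ := rfl
      have h2 := hUc ⟨y.1, ⟨hle1 y.2.1, y.2.2⟩⟩ y.2.1.1.1
      show ((intervalPresheaf k (Ico' a b)).map (homOfLE hle1).op s).1 y
          = s.1 ⟨x, hx.1, h⟩ * 1
      rw [h1, h2, mul_one]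
    have e1 := res_apply k f hle1 s x ⟨hxW, hx.2⟩
    have e2 := res_apply k f hle2 (oneSec k a b) x ⟨hxW, hx.2⟩
    have hsm := (f.hom.app (op W)).hom.map_smul (s.1 ⟨x, hx.1, h⟩)
      ((intervalPresheaf k (Ico' a b)).map (homOfLE hle2).op (oneSec k a b))
    rw [← e1, hkey]
    erw [hsm]
    have h3 : ((s.1 ⟨x, hx.1, h⟩ •
        f.hom.app (op W) ((intervalPresheaf k (Ico' a b)).map (homOfLE hle2).op
          (oneSec k a b))) : (secSub k (Ico' c d) W.1 : Type)).1 ⟨x, ⟨hxW, hx.2⟩⟩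
        = s.1 ⟨x, hx.1, h⟩ * (f.hom.app (op W) ((intervalPresheaf k (Ico' a b)).map
            (homOfLE hle2).op (oneSec k a b))).1 ⟨x, ⟨hxW, hx.2⟩⟩ := rfl
    rw [h3, e2]
    rfl
  · rw [dif_neg h]
    obtain ⟨W, hWo, hxW, hWV, hzero⟩ := germZero k V.2 s hx.1 h
    have hle : (⟨W, hWo⟩ : Opens (TopCat.of ℝ)) ≤ V := hWV
    have hres0 : (intervalPresheaf k (Ico' a b)).map (homOfLE hle).op s = 0 := by
      apply Subtype.ext
      funext y
      exact hzero y.1 ⟨y.2.1, y.2.2⟩ ⟨hWV y.2.1, y.2.2⟩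
    have e1 := res_apply k f hle s x ⟨hxW, hx.2⟩
    rw [hres0] at e1
    exact e1.symm.trans
      (congrFun (congrArg Subtype.val ((f.hom.app (op ⟨W, hWo⟩)).hom.map_zero)) _)

/-- A sheaf morphism whose components all vanish is zero. -/
lemma hom_eq_zero {I J : Set ℝ} {f : intervalSheaf k I ⟶ intervalSheaf k J}
    (h : ∀ (V : (Opens (TopCat.of ℝ))ᵒᵖ) (s : (secSub k I V.unop.1 : Type)),
      f.hom.app V s = 0) : f = 0 := by
  apply Sheaf.hom_ext
  apply NatTrans.ext
  funext V
  apply ModuleCat.hom_ext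
  apply LinearMap.ext
  intro s
  exact h V s

section Construction

variable {a c : ℝ} {b d : EReal}

open Classical in
/-- The extension-by-zero map on sections, defined when `a ≤ c` and `b ≤ d`. -/
def extFun (hac : a ≤ c) (V : Set ℝ) (s : ↥(V ∩ Ico' a b) → k) :
    ↥(V ∩ Ico' c d) → k :=
  fun y => if h : (y.1 : EReal) < b then s ⟨y.1, ⟨y.2.1, le_trans hac y.2.2.1, h⟩⟩ else 0

open Classical in
lemma extFun_mem (hac : a ≤ c) (hbd : b ≤ d) {V : Set ℝ} (hV : IsOpen V)
    (s : (secSub k (Ico' a b) V : Type)) :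
    extFun k hac (b := b) (d := d) V s.1 ∈ secSub k (Ico' c d) V := by
  constructor
  · rw [IsLocallyConstant.iff_exists_open]
    intro y
    by_cases hyb : (y.1 : EReal) < b
    · obtain ⟨U, hUo, hpU, hUc⟩ := s.2.1.exists_open ⟨y.1, ⟨y.2.1, le_trans hac y.2.2.1, hyb⟩⟩
      obtain ⟨O, hOo, hUO⟩ := isOpen_induced_iff.mp hUo
      subst hUO
      refine ⟨Subtype.val ⁻¹' (O ∩ (Vb b).1),
        (hOo.inter (Vb b).2).preimage continuous_subtype_val, ⟨hpU, hyb⟩, ?_⟩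
      intro z hz
      have hzb : (z.1 : EReal) < b := hz.2
      show extFun k hac V s.1 z = extFun k hac V s.1 y
      simp only [extFun]
      rw [dif_pos hzb, dif_pos hyb]
      exact (hUc ⟨z.1, ⟨z.2.1, le_trans hac z.2.2.1, hzb⟩⟩ hz.1)
    · have hyI : y.1 ∉ Ico' a b := fun hmem => hyb hmem.2
      obtain ⟨W, hWo, hyW, hWV, hzero⟩ := germZero k hV s y.2.1 hyI
      refine ⟨Subtype.val ⁻¹' W, hWo.preimage continuous_subtype_val, hyW, ?_⟩
      intro z hz
      show extFun k hac V s.1 z = extFun k hac V s.1 y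
      simp only [extFun]
      rw [dif_neg hyb]
      by_cases hzb : (z.1 : EReal) < b
      · rw [dif_pos hzb]
        exact hzero z.1 ⟨hz, ⟨le_trans hac z.2.2.1, hzb⟩⟩ _
      · rw [dif_neg hzb]
  · intro x hxV hxcl
    have hsub : {y : ℝ | ∃ hy : y ∈ V ∩ Ico' c d, extFun k hac V s.1 ⟨y, hy⟩ ≠ 0}
        ⊆ {y : ℝ | ∃ hy : y ∈ V ∩ Ico' a b, s.1 ⟨y, hy⟩ ≠ 0} ∩ Set.Ici c := by
      rintro y ⟨hy, hne⟩
      by_cases hyb : (y : EReal) < b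
      · simp only [extFun] at hne
        rw [dif_pos hyb] at hne
        exact ⟨⟨⟨hy.1, ⟨le_trans hac hy.2.1, hyb⟩⟩, hne⟩, hy.2.1⟩
      · simp only [extFun] at hne
        rw [dif_neg hyb] at hne
        exact absurd rfl hne
    have h1 : x ∈ closure {y : ℝ | ∃ hy : y ∈ V ∩ Ico' a b, s.1 ⟨y, hy⟩ ≠ 0} :=
      closure_mono (hsub.trans inter_subset_left) hxcl
    have h2 : x ∈ Set.Ici c := by
      have := closure_mono (hsub.trans inter_subset_right) hxcl
      rwa [isClosed_Ici.closure_eq] at this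
    obtain ⟨hab, hsne⟩ := s.2.2 x hxV h1
    have hxcd : x ∈ V ∩ Ico' c d := ⟨hxV, h2, lt_of_lt_of_le hab.2.2 hbd⟩
    refine ⟨hxcd, ?_⟩
    simp only [extFun]
    rw [dif_pos hab.2.2]
    exact hsne

open Classical in
/-- The canonical morphism `k_{[a,b)} ⟶ k_{[c,d)}` when `a ≤ c` and `b ≤ d`. -/
def canHom (hac : a ≤ c) (hbd : b ≤ d) :
    intervalSheaf k (Ico' a b) ⟶ intervalSheaf k (Ico' c d) :=
  ⟨{ app := fun V =>
      ModuleCat.ofHom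
        { toFun := fun s => ⟨extFun k hac V.unop.1 s.1, extFun_mem k hac hbd V.unop.2 s⟩
          map_add' := by
            intro s t
            apply Subtype.ext
            funext y
            show extFun k hac V.unop.1 (s.1 + t.1) y
              = extFun k hac V.unop.1 s.1 y + extFun k hac V.unop.1 t.1 y
            by_cases hyb : (y.1 : EReal) < b
            · simp only [extFun]
              rw [dif_pos hyb, dif_pos hyb, dif_pos hyb]
              rfl
            · simp only [extFun]
              rw [dif_neg hyb, dif_neg hyb, dif_neg hyb, add_zero]
          map_smul' := by
            intro r s
            apply Subtype.ext
            funext y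
            show extFun k hac V.unop.1 (r • s.1) y = r • extFun k hac V.unop.1 s.1 y
            by_cases hyb : (y.1 : EReal) < b
            · simp only [extFun]
              rw [dif_pos hyb, dif_pos hyb]
              rfl
            · simp only [extFun]
              rw [dif_neg hyb, dif_neg hyb, smul_zero] }
     naturality := by
      intro V W g
      apply ModuleCat.hom_ext
      apply LinearMap.ext
      intro s
      apply Subtype.ext
      funext y
      rfl }⟩

end Construction

end HomIcoIcoAux

/-- For `a, c ∈ ℝ` and `b, d ∈ ℝ ∪ {+∞}` with `a < b` and `c < d`,
the space `Hom(k_{[a,b)}, k_{[c,d)})` is one-dimensional over `k` if `a ≤ c < b ≤ d`,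
and is zero otherwise. -/
theorem hom_ico_ico (k : Type) [Field k] (a : ℝ) (b : EReal) (hab : (a : EReal) < b)
    (c : ℝ) (d : EReal) (hcd : (c : EReal) < d) :
    ((a ≤ c ∧ (c : EReal) < b ∧ b ≤ d) →
      Module.rank k (intervalSheaf k (Ico' a b) ⟶ intervalSheaf k (Ico' c d)) = 1) ∧
    (¬ (a ≤ c ∧ (c : EReal) < b ∧ b ≤ d) →
      ∀ f : intervalSheaf k (Ico' a b) ⟶ intervalSheaf k (Ico' c d), f = 0) := by
  classical
  constructor
  · rintro ⟨hac, hcb, hbd⟩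
    have hc : c ∈ (HomIcoIcoAux.Vb b).1 ∩ Ico' c d := ⟨hcb, le_refl c, hcd⟩
    set Φ : (intervalSheaf k (Ico' a b) ⟶ intervalSheaf k (Ico' c d)) →ₗ[k] k :=
      { toFun := fun f => (HomIcoIcoAux.tSec k f).1 ⟨c, hc⟩
        map_add' := fun f g => rfl
        map_smul' := fun r f => rfl } with hΦdef
    have hker : ∀ f : intervalSheaf k (Ico' a b) ⟶ intervalSheaf k (Ico' c d),
        Φ f = 0 → f = 0 := by
      intro f hf
      apply HomIcoIcoAux.hom_eq_zero
      intro V s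
      apply Subtype.ext
      funext y
      show (f.hom.app V s).1 y = (0 : k)
      have h0 : (f.hom.app V s).1 y =
          if h : y.1 ∈ Ico' a b then
            s.1 ⟨y.1, ⟨y.2.1, h⟩⟩ * (HomIcoIcoAux.tSec k f).1 ⟨y.1, ⟨h.2, y.2.2⟩⟩
          else 0 := HomIcoIcoAux.formula k f V.unop s y.1 y.2
      rw [h0]
      by_cases h : y.1 ∈ Ico' a b
      · rw [dif_pos h]
        have ht : (HomIcoIcoAux.tSec k f).1 ⟨y.1, ⟨h.2, y.2.2⟩⟩ = 0 :=
          (HomIcoIcoAux.tconst k (HomIcoIcoAux.tSec k f).1 (HomIcoIcoAux.tSec k f).2.1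
            ⟨y.1, ⟨h.2, y.2.2⟩⟩ ⟨c, hc⟩).trans hf
        rw [ht, mul_zero]
      · rw [dif_neg h]
    have hinj : Function.Injective Φ := by
      intro f g hfg
      have h1 : Φ (f - g) = 0 := by rw [map_sub, hfg, sub_self]
      exact sub_eq_zero.mp (hker _ h1)
    have hΦ1 : Φ (HomIcoIcoAux.canHom k hac hbd) = 1 := by
      show (HomIcoIcoAux.tSec k (HomIcoIcoAux.canHom k hac hbd)).1 ⟨c, hc⟩ = 1
      show HomIcoIcoAux.extFun k hac (HomIcoIcoAux.Vb b).1 (HomIcoIcoAux.oneSec k a b).1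
        ⟨c, hc⟩ = 1
      simp only [HomIcoIcoAux.extFun]
      rw [dif_pos hcb]
      rfl
    have hsurj : Function.Surjective Φ := by
      intro r
      refine ⟨r • HomIcoIcoAux.canHom k hac hbd, ?_⟩
      rw [map_smul, hΦ1, smul_eq_mul, mul_one]
    have e := LinearEquiv.ofBijective Φ ⟨hinj, hsurj⟩
    rw [e.rank_eq, Module.rank_self]
  · intro hncond f
    apply HomIcoIcoAux.hom_eq_zero
    intro V s
    apply Subtype.ext
    funext y
    show (f.hom.app V s).1 y = (0 : k)
    have h0 : (f.hom.app V s).1 y =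
        if h : y.1 ∈ Ico' a b then
          s.1 ⟨y.1, ⟨y.2.1, h⟩⟩ * (HomIcoIcoAux.tSec k f).1 ⟨y.1, ⟨h.2, y.2.2⟩⟩
        else 0 := HomIcoIcoAux.formula k f V.unop s y.1 y.2
    rw [h0]
    by_cases h : y.1 ∈ Ico' a b
    · rw [dif_pos h]
      have hxcb : (c : EReal) < b :=
        lt_of_le_of_lt (EReal.coe_le_coe_iff.mpr y.2.2.1) h.2
      have ht0 : (HomIcoIcoAux.tSec k f).1 ⟨y.1, ⟨h.2, y.2.2⟩⟩ = 0 := by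
        by_cases hac : a ≤ c
        · by_cases hbd : b ≤ d
          · exact absurd ⟨hac, hxcb, hbd⟩ hncond
          · push_neg at hbd
            have hdtop : d ≠ ⊤ := fun hd => absurd hbd (by rw [hd]; exact not_lt.mpr le_top)
            have hdbot : d ≠ ⊥ := fun hd => by rw [hd] at hcd; exact (not_lt_bot hcd)
            have hdd : (d.toReal : EReal) = d := EReal.coe_toReal hdtop hdbot
            set d' := d.toReal with hd'def
            by_contra hne
            have hall : ∀ z : ↥(HomIcoIcoAux.VbSet b ∩ Ico' c d),
                (HomIcoIcoAux.tSec k f).1 z ≠ 0 := by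
              intro z hz
              exact hne ((HomIcoIcoAux.tconst k (HomIcoIcoAux.tSec k f).1
                (HomIcoIcoAux.tSec k f).2.1 ⟨y.1, ⟨h.2, y.2.2⟩⟩ z).trans hz)
            have hcd' : c < d' := by rw [← EReal.coe_lt_coe_iff, hdd]; exact hcd
            have hd'b : (d' : EReal) < b := by rw [hdd]; exact hbd
            have hsubset : Ico c d' ⊆ {z : ℝ |
                ∃ hz : z ∈ (HomIcoIcoAux.Vb b).1 ∩ Ico' c d,
                  (HomIcoIcoAux.tSec k f).1 ⟨z, hz⟩ ≠ 0} := by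
              intro z hz
              have hzd : (z : EReal) < d := by
                rw [← hdd]; exact_mod_cast hz.2
              exact ⟨⟨lt_trans hzd hbd, hz.1, hzd⟩, hall _⟩
            have hclo : d' ∈ closure {z : ℝ |
                ∃ hz : z ∈ (HomIcoIcoAux.Vb b).1 ∩ Ico' c d,
                  (HomIcoIcoAux.tSec k f).1 ⟨z, hz⟩ ≠ 0} := by
              apply closure_mono hsubset
              rw [closure_Ico (ne_of_lt hcd')]
              exact ⟨le_of_lt hcd', le_refl d'⟩
            obtain ⟨hmem, -⟩ := (HomIcoIcoAux.tSec k f).2.2 d' hd'b hclo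
            have : (d' : EReal) < (d' : EReal) := by
              conv_rhs => rw [hdd]
              exact hmem.2.2
            exact lt_irrefl _ this
        · push_neg at hac
          have hc2 : c ∈ (HomIcoIcoAux.Vb b).1 ∩ Ico' c d := ⟨hxcb, le_refl c, hcd⟩
          have hcnot : c ∉ Ico' a b := fun hm => absurd hm.1 (not_le.mpr hac)
          obtain ⟨W, hWo, hcW, hWV, hzero⟩ :=
            HomIcoIcoAux.germZero k (HomIcoIcoAux.Vb b).2 (HomIcoIcoAux.oneSec k a b) hxcb hcnot
          have hle : (⟨W, hWo⟩ : Opens (TopCat.of ℝ)) ≤ HomIcoIcoAux.Vb b := hWV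
          have hres0 : (intervalPresheaf k (Ico' a b)).map (homOfLE hle).op
              (HomIcoIcoAux.oneSec k a b) = 0 := by
            apply Subtype.ext
            funext z
            exact hzero z.1 ⟨z.2.1, z.2.2⟩ ⟨hWV z.2.1, z.2.2⟩
          have e1 := HomIcoIcoAux.res_apply k f hle (HomIcoIcoAux.oneSec k a b) c ⟨hcW, hc2.2⟩
          rw [hres0] at e1
          have htc : (HomIcoIcoAux.tSec k f).1 ⟨c, hc2⟩ = 0 := e1.symm.trans
            (congrFun (congrArg Subtype.val
              ((f.hom.app (Opposite.op ⟨W, hWo⟩)).hom.map_zero)) _)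
          exact (HomIcoIcoAux.tconst k (HomIcoIcoAux.tSec k f).1
            (HomIcoIcoAux.tSec k f).2.1 ⟨y.1, ⟨h.2, y.2.2⟩⟩ ⟨c, hc2⟩).trans htc
      rw [ht0, mul_zero]
    · rw [dif_neg h]

end
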